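/- The finite-dimensional algebra A(q) is a symmetric algebra (A ≅ A* as A-bimodules) if and only if for every 1 ≤ i ≤ n−1 one has q_{in} = (∏_{1≤p<i} q_{pi}) · (∏_{i<p≤n−1} q_{ip}^{-1}). -/

import Mathlib

open Finset

inductive AqRel (K : Type) [Field K] (n : ℕ) (q : Fin n → Fin n → K) :
    FreeAlgebra K (Fin n) → FreeAlgebra K (Fin n) → Prop
  | comm : ∀ i j : Fin n, i < j →
      AqRel K n q (FreeAlgebra.ι K j * FreeAlgebra.ι K i)
        (q i j • (FreeAlgebra.ι K i * FreeAlgebra.ι K j))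
  | sq : ∀ i : Fin n, AqRel K n q (FreeAlgebra.ι K i * FreeAlgebra.ι K i) 0

abbrev Aq (K : Type) [Field K] (n : ℕ) (q : Fin n → Fin n → K) : Type :=
  RingQuot (AqRel K n q)

namespace AqAux

variable (K : Type) [Field K] (n : ℕ) (q : Fin n → Fin n → K)

/-- The generators of `Aq`. -/
noncomputable def Xg (i : Fin n) : Aq K n q :=
  RingQuot.mkAlgHom K (AqRel K n q) (FreeAlgebra.ι K i)

variable {K n q}

lemma Xg_comm {i j : Fin n} (h : i < j) :
    Xg K n q j * Xg K n q i = q i j • (Xg K n q i * Xg K n q j) := by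
  have hr : AqRel K n q (FreeAlgebra.ι K j * FreeAlgebra.ι K i)
      (q i j • (FreeAlgebra.ι K i * FreeAlgebra.ι K j)) := AqRel.comm i j h
  have := RingQuot.mkAlgHom_rel K hr
  simpa [Xg, map_mul, map_smul] using this

lemma Xg_sq (i : Fin n) : Xg K n q i * Xg K n q i = 0 := by
  have hr : AqRel K n q (FreeAlgebra.ι K i * FreeAlgebra.ι K i) 0 := AqRel.sq i
  have := RingQuot.mkAlgHom_rel K hr
  simpa [Xg, map_mul] using this

variable (K n q)

/-- Coefficient: moving `X i` to the left past the ordered monomial on `T`. -/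
def co (i : Fin n) (T : Finset (Fin n)) : K := ∏ j ∈ T, if j < i then q j i else 1

/-- The opposite-side coefficient. -/
def oc (i : Fin n) (T : Finset (Fin n)) : K := ∏ j ∈ T, if i < j then q i j else 1

/-- Structure constant `X_S · X_T = ccc S T • X_{S∪T}` for disjoint `S T`. -/
def ccc (S T : Finset (Fin n)) : K := ∏ a ∈ S, co K n q a T

variable {K n q}

lemma co_insert {a : Fin n} {T : Finset (Fin n)} (i : Fin n) (ha : a ∉ T) :
    co K n q i (insert a T) = (if a < i then q a i else 1) * co K n q i T :=
  Finset.prod_insert ha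

lemma co_empty (i : Fin n) : co K n q i (∅ : Finset (Fin n)) = 1 := rfl

lemma co_eq_one {i : Fin n} {T : Finset (Fin n)} (h : ∀ j ∈ T, ¬ j < i) :
    co K n q i T = 1 :=
  Finset.prod_eq_one fun j hj => if_neg (h j hj)

lemma co_union {i : Fin n} {S T : Finset (Fin n)} (h : Disjoint S T) :
    co K n q i (S ∪ T) = co K n q i S * co K n q i T :=
  Finset.prod_union h

variable (hq : ∀ i j : Fin n, i < j → q i j ≠ 0)
include hq

lemma co_ne_zero (i : Fin n) (T : Finset (Fin n)) : co K n q i T ≠ 0 := by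
  refine Finset.prod_ne_zero_iff.2 fun j _ => ?_
  split_ifs with h
  · exact hq _ _ h
  · exact one_ne_zero

lemma oc_ne_zero (i : Fin n) (T : Finset (Fin n)) : oc K n q i T ≠ 0 := by
  refine Finset.prod_ne_zero_iff.2 fun j _ => ?_
  split_ifs with h
  · exact hq _ _ h
  · exact one_ne_zero

lemma ccc_ne_zero (S T : Finset (Fin n)) : ccc K n q S T ≠ 0 :=
  Finset.prod_ne_zero_iff.2 fun a _ => co_ne_zero hq a T

omit hq

/-! ### The regular representation, used for linear independence -/

variable (K n q)

/-- Left multiplication operator by `X i` on the model space. -/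
noncomputable def Lop (i : Fin n) : (Finset (Fin n) → K) →ₗ[K] (Finset (Fin n) → K) where
  toFun x := fun S => if i ∈ S then co K n q i (S.erase i) * x (S.erase i) else 0
  map_add' x y := by
    funext S
    by_cases h : i ∈ S <;> simp [h, mul_add]
  map_smul' c x := by
    funext S
    by_cases h : i ∈ S <;> simp [h, mul_comm, mul_left_comm]

variable {K n q}

lemma Lop_apply (i : Fin n) (x : Finset (Fin n) → K) (S : Finset (Fin n)) :
    Lop K n q i x S = if i ∈ S then co K n q i (S.erase i) * x (S.erase i) else 0 := rfl

lemma Lop_sq (i : Fin n) :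
    (Lop K n q i : Module.End K (Finset (Fin n) → K)) * Lop K n q i = 0 := by
  apply LinearMap.ext; intro x; funext S
  simp [Module.End.mul_apply, Lop_apply]

lemma Lop_comm {i j : Fin n} (hij : i < j) :
    (Lop K n q j : Module.End K (Finset (Fin n) → K)) * Lop K n q i =
      q i j • ((Lop K n q i : Module.End K (Finset (Fin n) → K)) * Lop K n q j) := by
  have hne : i ≠ j := ne_of_lt hij
  apply LinearMap.ext; intro x; funext S
  simp only [Module.End.mul_apply, LinearMap.smul_apply, Pi.smul_apply, Lop_apply, smul_eq_mul]
  by_cases hi : i ∈ S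
  · by_cases hj : j ∈ S
    · rw [if_pos hj, if_pos hi, if_pos (Finset.mem_erase.2 ⟨hne, hi⟩),
        if_pos (Finset.mem_erase.2 ⟨hne.symm, hj⟩)]
      set E := (S.erase i).erase j with hE
      have hE' : (S.erase j).erase i = E := by
        rw [hE, Finset.erase_right_comm]
      have hiE : i ∉ E := fun h => (Finset.mem_erase.1 (Finset.mem_of_mem_erase h)).1 rfl
      have hjE : j ∉ E := fun h => (Finset.mem_erase.1 h).1 rfl
      have h1 : S.erase j = insert i E := by
        rw [← hE', Finset.insert_erase (Finset.mem_erase.2 ⟨hne, hi⟩)]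
      have h2 : S.erase i = insert j E := by
        rw [hE, Finset.insert_erase (Finset.mem_erase.2 ⟨hne.symm, hj⟩)]
      rw [hE', h1, h2, co_insert _ hiE, co_insert _ hjE, if_pos hij,
        if_neg (not_lt_of_gt hij)]
      ring
    · rw [if_neg hj, if_pos hi, if_neg (fun h => hj (Finset.mem_of_mem_erase h)), mul_zero,
        mul_zero]
  · by_cases hj : j ∈ S
    · rw [if_pos hj, if_neg hi, if_neg (fun h => hi (Finset.mem_of_mem_erase h)), mul_zero,
        mul_zero]
    · rw [if_neg hi, if_neg hj, mul_zero]

variable (K n q)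

lemma rho_aux : ∀ ⦃x y : FreeAlgebra K (Fin n)⦄, AqRel K n q x y →
    FreeAlgebra.lift K (Lop K n q) x = FreeAlgebra.lift K (Lop K n q) y := by
  intro x y h
  cases h with
  | comm i j hij =>
      simp only [map_mul, map_smul, FreeAlgebra.lift_ι_apply]
      exact Lop_comm hij
  | sq i =>
      simp only [map_mul, map_zero, FreeAlgebra.lift_ι_apply]
      exact Lop_sq i

/-- The regular representation of `Aq` on the model space. -/
noncomputable def rho : Aq K n q →ₐ[K] Module.End K (Finset (Fin n) → K) :=
  RingQuot.liftAlgHom K ⟨FreeAlgebra.lift K (Lop K n q), rho_aux K n q⟩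

lemma rho_X (i : Fin n) : rho K n q (Xg K n q i) = Lop K n q i := by
  rw [Xg, rho, RingQuot.liftAlgHom_mkAlgHom_apply, FreeAlgebra.lift_ι_apply]

/-- Delta functions on the model space. -/
def dd (S : Finset (Fin n)) : Finset (Fin n) → K := fun T => if T = S then 1 else 0

variable {K n q}

lemma dd_apply (S T : Finset (Fin n)) : dd K n S T = if T = S then 1 else 0 := rfl

lemma Lop_dd (i : Fin n) (S : Finset (Fin n)) :
    Lop K n q i (dd K n S) =
      if i ∈ S then 0 else co K n q i S • dd K n (insert i S) := by
  by_cases hiS : i ∈ S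
  · rw [if_pos hiS]
    funext T
    rw [Lop_apply, Pi.zero_apply]
    by_cases hiT : i ∈ T
    · rw [if_pos hiT, dd_apply]
      have : ¬ T.erase i = S := fun h => (Finset.notMem_erase i T) (h ▸ hiS)
      rw [if_neg this, mul_zero]
    · rw [if_neg hiT]
  · rw [if_neg hiS]
    funext T
    rw [Lop_apply, Pi.smul_apply, dd_apply, smul_eq_mul]
    by_cases hiT : i ∈ T
    · rw [if_pos hiT, dd_apply]
      by_cases hTS : T.erase i = S
      · have hT : T = insert i S := by rw [← hTS, Finset.insert_erase hiT]
        rw [if_pos hTS, if_pos hT, hTS]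
      · have hT : ¬ T = insert i S := by
          intro h
          exact hTS (by rw [h, Finset.erase_insert hiS])
        rw [if_neg hTS, if_neg hT, mul_zero, mul_zero]
    · have hT : ¬ T = insert i S := fun h => hiT (h ▸ Finset.mem_insert_self i S)
      rw [if_neg hiT, dd_apply, if_neg hT, mul_zero]

variable (K n q)

/-- The ordered monomial attached to a subset. -/
noncomputable def mon (S : Finset (Fin n)) : Aq K n q :=
  ((S.sort (· ≤ ·)).map (Xg K n q)).prod

lemma mon_empty : mon K n q ∅ = 1 := by simp [mon]

variable {K n q}

lemma mon_insert {a : Fin n} {S : Finset (Fin n)} (ha : a ∉ S) (h : ∀ b ∈ S, a < b) :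
    mon K n q (insert a S) = Xg K n q a * mon K n q S := by
  rw [mon, Finset.sort_insert (· ≤ ·) (fun b hb => le_of_lt (h b hb)) ha, List.map_cons,
    List.prod_cons, mon]

lemma mon_singleton (i : Fin n) : mon K n q {i} = Xg K n q i := by
  have : ({i} : Finset (Fin n)) = insert i ∅ := rfl
  rw [this, mon_insert (Finset.notMem_empty i) (fun b hb => absurd hb (Finset.notMem_empty b)),
    mon_empty, mul_one]

lemma mon_peel {S : Finset (Fin n)} (hS : S.Nonempty) :
    mon K n q S = Xg K n q (S.min' hS) * mon K n q (S.erase (S.min' hS)) := by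
  conv_lhs => rw [← Finset.insert_erase (S.min'_mem hS)]
  exact mon_insert (Finset.notMem_erase _ _)
    (fun b hb => Finset.min'_lt_of_mem_erase_min' S hS hb)

lemma Xg_mul_mon (i : Fin n) (S : Finset (Fin n)) :
    Xg K n q i * mon K n q S =
      if i ∈ S then 0 else co K n q i S • mon K n q (insert i S) := by
  induction S using Finset.strongInduction with
  | _ S ih =>
    rcases Finset.eq_empty_or_nonempty S with rfl | hS
    · rw [mon_empty, mul_one, if_neg (Finset.notMem_empty i), co_empty, one_smul,
        mon_insert (Finset.notMem_empty i) (fun b hb => absurd hb (Finset.notMem_empty b)),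
        mon_empty, mul_one]
    · set j := S.min' hS with hj
      set S' := S.erase j with hS'
      have hpeel := mon_peel (K := K) (q := q) hS
      rcases lt_trichotomy i j with hij | hij | hij
      · have hiS : i ∉ S := fun h => absurd (Finset.min'_le S i h) (not_le_of_gt hij)
        rw [if_neg hiS, co_eq_one (fun b hb => not_lt_of_gt (lt_of_lt_of_le hij
          (Finset.min'_le S b hb))), one_smul,
          mon_insert hiS (fun b hb => lt_of_lt_of_le hij (Finset.min'_le S b hb))]
      · subst hij
        rw [if_pos (S.min'_mem hS), hpeel, ← mul_assoc, Xg_sq, zero_mul]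
      · have hjS' : j ∉ S' := Finset.notMem_erase _ _
        have hsub : S' ⊂ S := Finset.erase_ssubset (S.min'_mem hS)
        rw [hpeel, ← mul_assoc, Xg_comm hij, smul_mul_assoc, mul_assoc, ih S' hsub]
        by_cases hiS' : i ∈ S'
        · rw [if_pos hiS', mul_zero, smul_zero, if_pos (Finset.mem_of_mem_erase hiS')]
        · have hiS : i ∉ S := by
            intro h
            exact hiS' (Finset.mem_erase.2 ⟨ne_of_gt hij, h⟩)
          rw [if_neg hiS', if_neg hiS, mul_smul_comm, smul_smul]
          have h1 : Xg K n q j * mon K n q (insert i S') = mon K n q (insert j (insert i S')) := by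
            refine (mon_insert ?_ ?_).symm
            · intro h
              rcases Finset.mem_insert.1 h with h | h
              · exact (ne_of_gt hij) h.symm
              · exact hjS' h
            · intro b hb
              rcases Finset.mem_insert.1 hb with rfl | hb
              · exact hij
              · exact Finset.min'_lt_of_mem_erase_min' S hS hb
          have h2 : insert j (insert i S') = insert i S := by
            rw [Finset.insert_comm, hS', Finset.insert_erase (S.min'_mem hS)]
          have h3 : co K n q i S = q j i * co K n q i S' := by
            conv_lhs => rw [← Finset.insert_erase (S.min'_mem hS)]
            rw [← hS', co_insert _ hjS', if_pos hij]
          rw [h1, h2, h3]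

lemma mon_mul_mon (S T : Finset (Fin n)) :
    mon K n q S * mon K n q T =
      if Disjoint S T then ccc K n q S T • mon K n q (S ∪ T) else 0 := by
  induction S using Finset.strongInduction with
  | _ S ih =>
    rcases Finset.eq_empty_or_nonempty S with rfl | hS
    · rw [mon_empty, one_mul, if_pos (Finset.disjoint_empty_left T), Finset.empty_union]
      have : ccc K n q ∅ T = 1 := rfl
      rw [this, one_smul]
    · set j := S.min' hS with hj
      set S' := S.erase j with hS'
      have hjS' : j ∉ S' := Finset.notMem_erase _ _
      have hsub : S' ⊂ S := Finset.erase_ssubset (S.min'_mem hS)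
      have hins : insert j S' = S := by rw [hS', Finset.insert_erase (S.min'_mem hS)]
      rw [mon_peel hS, mul_assoc, ih S' hsub]
      by_cases hd' : Disjoint S' T
      · rw [if_pos hd', mul_smul_comm, Xg_mul_mon]
        by_cases hjT : j ∈ T
        · have hnd : ¬ Disjoint S T :=
            fun h => (Finset.disjoint_left.1 h) (S.min'_mem hS) hjT
          rw [if_pos (Finset.mem_union_right S' hjT), smul_zero, if_neg hnd]
        · have hjST : j ∉ S' ∪ T := by
            rw [Finset.mem_union]; rintro (h | h); exacts [hjS' h, hjT h]
          have hd : Disjoint S T := by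
            rw [← hins, Finset.disjoint_insert_left]
            exact ⟨hjT, hd'⟩
          rw [if_neg hjST, if_pos hd, smul_smul]
          have h1 : insert j (S' ∪ T) = S ∪ T := by rw [← Finset.insert_union, hins]
          have h2 : co K n q j (S' ∪ T) = co K n q j T := by
            rw [co_union hd', co_eq_one (fun b hb =>
              not_lt_of_gt (Finset.min'_lt_of_mem_erase_min' S hS hb)), one_mul]
          have h3 : ccc K n q S T = co K n q j T * ccc K n q S' T := by
            rw [← hins, ccc, Finset.prod_insert hjS']; rfl
          rw [h1, h2, h3, mul_comm]
      · have hnd : ¬ Disjoint S T := fun h => hd' (h.mono_left (Finset.erase_subset j S))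
        rw [if_neg hd', if_neg hnd, mul_zero]

variable (K n q)

/-- Evaluation of the regular representation at the delta of `∅`. -/
noncomputable def ev : Aq K n q →ₗ[K] (Finset (Fin n) → K) where
  toFun x := rho K n q x (dd K n ∅)
  map_add' x y := by simp [map_add, LinearMap.add_apply]
  map_smul' c x := by simp [map_smul, LinearMap.smul_apply]

variable {K n q}

lemma ev_mon (S : Finset (Fin n)) : ev K n q (mon K n q S) = dd K n S := by
  induction S using Finset.strongInduction with
  | _ S ih =>
    rcases Finset.eq_empty_or_nonempty S with rfl | hS
    · show rho K n q (mon K n q ∅) (dd K n ∅) = dd K n ∅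
      rw [mon_empty, map_one, Module.End.one_apply]
    · set j := S.min' hS with hj
      set S' := S.erase j with hS'
      have hsub : S' ⊂ S := Finset.erase_ssubset (S.min'_mem hS)
      show rho K n q (mon K n q S) (dd K n ∅) = dd K n S
      rw [mon_peel hS, map_mul, Module.End.mul_apply]
      have : rho K n q (mon K n q S') (dd K n ∅) = dd K n S' := ih S' hsub
      rw [this, rho_X, Lop_dd, if_neg (Finset.notMem_erase _ _),
        co_eq_one (fun b hb => not_lt_of_gt (Finset.min'_lt_of_mem_erase_min' S hS hb)),
        one_smul, Finset.insert_erase (S.min'_mem hS)]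

lemma mon_li : LinearIndependent K (mon K n q) := by
  have hdd : LinearIndependent K (dd K n) := by
    rw [Fintype.linearIndependent_iff]
    intro g hg S
    have := congrFun hg S
    simpa [dd, Finset.sum_apply] using this
  refine LinearIndependent.of_comp (ev K n q) ?_
  have h : (ev K n q) ∘ (mon K n q) = dd K n := funext ev_mon
  rw [h]
  exact hdd

lemma mon_span : ⊤ ≤ Submodule.span K (Set.range (mon K n q)) := by
  set V := Submodule.span K (Set.range (mon K n q)) with hV
  have hXg : ∀ i, Xg K n q i ∈ V := fun i =>
    Submodule.subset_span ⟨{i}, mon_singleton i⟩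
  have hadj : Algebra.adjoin K (Set.range (Xg K n q)) = ⊤ := by
    have h1 : Set.range (Xg K n q) =
        (RingQuot.mkAlgHom K (AqRel K n q)) '' (Set.range (FreeAlgebra.ι K)) := by
      rw [← Set.range_comp]; rfl
    rw [h1, ← AlgHom.map_adjoin, FreeAlgebra.adjoin_range_ι, Algebra.map_top,
      AlgHom.range_eq_top]
    exact RingQuot.mkAlgHom_surjective K _
  intro x _
  have hx : x ∈ Subalgebra.toSubmodule (Algebra.adjoin K (Set.range (Xg K n q))) := by
    rw [hadj]; trivial
  rw [Algebra.adjoin_eq_span] at hx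
  have hcl : ∀ z ∈ Submonoid.closure (Set.range (Xg K n q)), z ∈ V := by
    intro z hz
    induction hz using Submonoid.closure_induction with
    | mem z hz => rcases hz with ⟨i, rfl⟩; exact hXg i
    | one => exact mon_empty (q := q) ▸ Submodule.subset_span ⟨∅, rfl⟩
    | mul a b ha hb iha ihb =>
        have hmul : V * V ≤ V := by
          rw [hV, Submodule.span_mul_span]
          refine Submodule.span_le.2 ?_
          rintro z ⟨u, hu, v, hv, rfl⟩
          rcases hu with ⟨S, rfl⟩
          rcases hv with ⟨T, rfl⟩
          show mon K n q S * mon K n q T ∈ V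
          rw [mon_mul_mon]
          split_ifs
          · exact Submodule.smul_mem _ _ (Submodule.subset_span ⟨S ∪ T, rfl⟩)
          · exact Submodule.zero_mem _

        exact hmul (Submodule.mul_mem_mul iha ihb)
  exact Submodule.span_le.2 hcl hx

variable (K n q)

/-- The monomial basis of `Aq`. -/
noncomputable def bb : Module.Basis (Finset (Fin n)) K (Aq K n q) :=
  Module.Basis.mk mon_li mon_span

lemma bb_apply (S : Finset (Fin n)) : bb K n q S = mon K n q S := Module.Basis.mk_apply _ _ _

/-- The trace functional: coefficient of the top monomial. -/
noncomputable def tt : Aq K n q →ₗ[K] K :=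
  (LinearMap.proj (Finset.univ : Finset (Fin n))).comp (ev K n q)

variable {K n q}

lemma tt_mon (S : Finset (Fin n)) :
    tt K n q (mon K n q S) = if S = Finset.univ then 1 else 0 := by
  show ev K n q (mon K n q S) Finset.univ = _
  rw [ev_mon, dd]
  by_cases h : S = Finset.univ
  · rw [if_pos h, if_pos h.symm]
  · rw [if_neg h, if_neg (fun h' => h h'.symm)]

lemma compl_of_disj_union {S T : Finset (Fin n)} (hd : Disjoint S T)
    (hu : S ∪ T = Finset.univ) : T = Sᶜ := by
  ext a
  simp only [Finset.mem_compl]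
  constructor
  · intro ha hS
    exact (Finset.disjoint_left.1 hd) hS ha
  · intro ha
    have : a ∈ S ∪ T := hu ▸ Finset.mem_univ a
    rcases Finset.mem_union.1 this with h | h
    · exact absurd h ha
    · exact h

lemma tt_mm (S T : Finset (Fin n)) :
    tt K n q (mon K n q S * mon K n q T) =
      if T = Sᶜ then ccc K n q S Sᶜ else 0 := by
  rw [mon_mul_mon]
  by_cases hT : T = Sᶜ
  · subst hT
    rw [if_pos disjoint_compl_right, if_pos rfl, map_smul, tt_mon,
      if_pos (Finset.union_compl S), smul_eq_mul, mul_one]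
  · rw [if_neg hT]
    by_cases hd : Disjoint S T
    · rw [if_pos hd, map_smul, tt_mon, smul_eq_mul]
      have : ¬ S ∪ T = Finset.univ := fun h => hT (compl_of_disj_union hd h)
      rw [if_neg this, mul_zero]
    · rw [if_neg hd, map_zero]

/-! ### The combinatorial identities -/

variable (K n q)

/-- `PA i = ∏_{p<i} q p i`. -/
def PA (i : Fin n) : K := ∏ p ∈ univ.filter (fun p : Fin n => p < i), q p i

/-- `PB i = ∏_{i<p} q i p`. -/
def PB (i : Fin n) : K := ∏ p ∈ univ.filter (fun p : Fin n => i < p), q i p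

variable {K n q}

lemma PA_eq_co (i : Fin n) : PA K n q i = co K n q i Finset.univ := by
  rw [PA, co, Finset.prod_filter]

lemma PB_eq_oc (i : Fin n) : PB K n q i = oc K n q i Finset.univ := by
  rw [PB, oc, Finset.prod_filter]

include hq in
lemma PA_ne_zero (i : Fin n) : PA K n q i ≠ 0 := by
  rw [PA_eq_co]; exact co_ne_zero hq i _

lemma oc_union {i : Fin n} {S T : Finset (Fin n)} (h : Disjoint S T) :
    oc K n q i (S ∪ T) = oc K n q i S * oc K n q i T :=
  Finset.prod_union h

lemma oc_insert {a : Fin n} {T : Finset (Fin n)} {i : Fin n} (ha : a ∉ T) :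
    oc K n q i (insert a T) = (if i < a then q i a else 1) * oc K n q i T :=
  Finset.prod_insert ha

lemma swap_prod (S : Finset (Fin n)) :
    ∏ a ∈ S, co K n q a S = ∏ a ∈ S, oc K n q a S := by
  rw [show (∏ a ∈ S, oc K n q a S) =
      ∏ a ∈ S, ∏ j ∈ S, (if a < j then q a j else 1) from rfl, Finset.prod_comm]
  rfl

lemma ccc_compl_swap (S : Finset (Fin n)) :
    ccc K n q Sᶜ S = ∏ a ∈ S, oc K n q a Sᶜ := by
  rw [show ccc K n q Sᶜ S = ∏ x ∈ Sᶜ, ∏ j ∈ S, (if j < x then q j x else 1) from rfl,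
    Finset.prod_comm]
  rfl

include hq in
lemma cc_compl (hAB : ∀ i, PA K n q i = PB K n q i) (S : Finset (Fin n)) :
    ccc K n q S Sᶜ = ccc K n q Sᶜ S := by
  have h1 : ∏ a ∈ S, PA K n q a = (∏ a ∈ S, co K n q a S) * ccc K n q S Sᶜ := by
    rw [ccc, ← Finset.prod_mul_distrib]
    refine Finset.prod_congr rfl fun a _ => ?_
    rw [PA_eq_co, ← Finset.union_compl S, co_union disjoint_compl_right]
  have h2 : ∏ a ∈ S, PB K n q a = (∏ a ∈ S, oc K n q a S) * ccc K n q Sᶜ S := by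
    rw [ccc_compl_swap, ← Finset.prod_mul_distrib]
    refine Finset.prod_congr rfl fun a _ => ?_
    rw [PB_eq_oc, ← Finset.union_compl S, oc_union disjoint_compl_right]
  have h3 : (∏ a ∈ S, co K n q a S) ≠ 0 :=
    Finset.prod_ne_zero_iff.2 fun a _ => co_ne_zero hq a S
  have h4 : ∏ a ∈ S, PA K n q a = ∏ a ∈ S, PB K n q a :=
    Finset.prod_congr rfl fun a _ => hAB a
  rw [h1, h2, ← swap_prod] at h4
  exact mul_left_cancel₀ h3 h4

lemma prod_PA_eq_PB :
    ∏ i : Fin n, PA K n q i = ∏ i : Fin n, PB K n q i := by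
  calc ∏ i : Fin n, PA K n q i = ∏ i ∈ Finset.univ, co K n q i Finset.univ :=
        Finset.prod_congr rfl fun i _ => PA_eq_co i
    _ = ∏ i ∈ Finset.univ, oc K n q i Finset.univ := swap_prod Finset.univ
    _ = ∏ i : Fin n, PB K n q i :=
        Finset.prod_congr rfl fun i _ => (PB_eq_oc i).symm


lemma insert_compl_self_fin (i : Fin n) :
    insert i (({i} : Finset (Fin n))ᶜ) = Finset.univ := by
  ext a; by_cases h : a = i <;> simp [h]

lemma ccc_singleton_compl (i : Fin n) :
    ccc K n q {i} ({i} : Finset (Fin n))ᶜ = PA K n q i := by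
  rw [ccc, Finset.prod_singleton, PA_eq_co, ← insert_compl_self_fin i,
    co_insert _ (by simp), if_neg (lt_irrefl i), one_mul]

lemma ccc_compl_singleton (i : Fin n) :
    ccc K n q ({i} : Finset (Fin n))ᶜ {i} = PB K n q i := by
  have h1 : ccc K n q ({i} : Finset (Fin n))ᶜ {i} = oc K n q i ({i} : Finset (Fin n))ᶜ := by
    rw [ccc, oc]
    exact Finset.prod_congr rfl fun a _ => Finset.prod_singleton _ _
  rw [h1, PB_eq_oc, ← insert_compl_self_fin i, oc_insert (by simp),
    if_neg (lt_irrefl i), one_mul]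

include hq in
lemma PB_ne_zero (i : Fin n) : PB K n q i ≠ 0 := by
  rw [PB_eq_oc]; exact oc_ne_zero hq i _

end AqAux

open AqAux in
/-- **Proposition C (i).**  `A(q)` is a symmetric algebra (`A ≅ A*` as `A`-bimodules,
unfolded via `φ(a·x)(y) = φ(x)(y·a)` and `φ(x·a)(y) = φ(x)(a·y)`) if and only if for
every `1 ≤ i ≤ n−1` (here: every index `i` with `i < n-1` in `0`-based indexing, the
last index `⟨n-1,_⟩` playing the role of `n`):
`q_{in} = (∏_{p<i} q_{pi}) · (∏_{i<p≤n−1} q_{ip}⁻¹)`. -/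
theorem stmt11 (K : Type) [Field K] (n : ℕ) (hn : 2 ≤ n)
    (q : Fin n → Fin n → K) (hq : ∀ i j : Fin n, i < j → q i j ≠ 0) :
    (∃ φ : Aq K n q ≃ₗ[K] Module.Dual K (Aq K n q),
        (∀ a x y : Aq K n q, φ (a * x) y = φ x (y * a)) ∧
        (∀ a x y : Aq K n q, φ (x * a) y = φ x (a * y))) ↔
    (∀ i : Fin n, (i : ℕ) < n - 1 →
        q i ⟨n - 1, by omega⟩ =
          (∏ p ∈ univ.filter (fun p : Fin n => p < i), q p i) *
          (∏ p ∈ univ.filter (fun p : Fin n => i < p ∧ (p : ℕ) < n - 1), (q i p)⁻¹)) := by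
  have hn1 : n - 1 < n := by omega
  set last : Fin n := ⟨n - 1, hn1⟩ with hlast
  -- the per-index condition is equivalent to `PA i = PB i`
  have cond_iff : ∀ i : Fin n, (i : ℕ) < n - 1 →
      ((q i last =
          (∏ p ∈ univ.filter (fun p : Fin n => p < i), q p i) *
          (∏ p ∈ univ.filter (fun p : Fin n => i < p ∧ (p : ℕ) < n - 1), (q i p)⁻¹)) ↔
        PA K n q i = PB K n q i) := by
    intro i hi
    have hset : univ.filter (fun p : Fin n => i < p ∧ (p : ℕ) < n - 1) =
        (univ.filter (fun p : Fin n => i < p)).erase last := by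
      ext p
      have hp := p.isLt
      simp only [Finset.mem_filter, Finset.mem_erase, Finset.mem_univ, true_and, hlast,
        Fin.lt_def, Ne, Fin.ext_iff]
      omega
    have hmem : last ∈ univ.filter (fun p : Fin n => i < p) := by
      simp only [Finset.mem_filter, Finset.mem_univ, true_and, hlast, Fin.lt_def]
      exact hi
    have hPB : PB K n q i =
        q i last * ∏ p ∈ (univ.filter (fun p : Fin n => i < p)).erase last, q i p :=
      (Finset.mul_prod_erase _ _ hmem).symm
    have hP2 : (∏ p ∈ (univ.filter (fun p : Fin n => i < p)).erase last, q i p) ≠ 0 := by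
      refine Finset.prod_ne_zero_iff.2 fun p hp => ?_
      have := (Finset.mem_filter.1 (Finset.mem_of_mem_erase hp)).2
      exact hq _ _ this
    rw [hset, Finset.prod_inv_distrib, show (∏ p ∈ univ.filter (fun p : Fin n => p < i), q p i)
      = PA K n q i from rfl, eq_mul_inv_iff_mul_eq₀ hP2]
    constructor
    · intro h; rw [hPB, ← h]
    · intro h; rw [h, hPB]
  constructor
  · -- symmetric ⇒ condition
    rintro ⟨φ, h1, h2⟩ i hi
    have trace : ∀ a y : Aq K n q, φ 1 (a * y) = φ 1 (y * a) := by
      intro a y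
      have e1 : φ a y = φ 1 (a * y) := by
        have := h2 a 1 y; rwa [one_mul] at this
      have e2 : φ a y = φ 1 (y * a) := by
        have := h1 a 1 y; rwa [mul_one] at this
      rw [← e1, e2]
    have hmuniv : φ 1 (mon K n q Finset.univ) ≠ 0 := by
      intro h0
      have hφ0 : φ (mon K n q Finset.univ) = 0 := by
        apply LinearMap.ext; intro y
        have e1 : φ (mon K n q Finset.univ) y = φ 1 (mon K n q Finset.univ * y) := by
          have := h2 (mon K n q Finset.univ) 1 y; rwa [one_mul] at this
        have hy : mon K n q Finset.univ * y =
            (bb K n q).repr y ∅ • mon K n q Finset.univ := by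
          conv_lhs => rw [← Module.Basis.sum_repr (bb K n q) y]
          rw [Finset.mul_sum, Finset.sum_eq_single_of_mem ∅ (Finset.mem_univ ∅)]
          · rw [bb_apply, mul_smul_comm, mon_mul_mon,
              if_pos (Finset.disjoint_empty_right _), Finset.union_empty]
            have hccc1 : ccc K n q Finset.univ ∅ = 1 :=
              Finset.prod_eq_one fun a _ => rfl
            rw [hccc1, one_smul]
          · intro T _ hT
            have hnd : ¬ Disjoint Finset.univ T := by
              intro h
              obtain ⟨a, ha⟩ := Finset.nonempty_iff_ne_empty.2 hT
              exact Finset.disjoint_left.1 h (Finset.mem_univ a) ha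
            rw [bb_apply, mul_smul_comm, mon_mul_mon, if_neg hnd, smul_zero]
        rw [e1, hy, map_smul, smul_eq_mul, h0, mul_zero, LinearMap.zero_apply]
      have hz : mon K n q Finset.univ = 0 := by
        apply φ.injective
        rw [hφ0, map_zero]
      exact (bb K n q).ne_zero Finset.univ (by rw [bb_apply]; exact hz)
    have key : PA K n q i = PB K n q i := by
      have e := trace (mon K n q {i}) (mon K n q ({i} : Finset (Fin n))ᶜ)
      have hcu : ({i} : Finset (Fin n))ᶜ ∪ {i} = Finset.univ := by
        rw [Finset.union_comm, Finset.union_compl]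
      rw [mon_mul_mon, mon_mul_mon, if_pos disjoint_compl_right, if_pos disjoint_compl_left,
        Finset.union_compl, hcu, map_smul, map_smul, smul_eq_mul,
        smul_eq_mul, ccc_singleton_compl, ccc_compl_singleton] at e
      exact mul_right_cancel₀ hmuniv e
    exact (cond_iff i hi).2 key
  · -- condition ⇒ symmetric
    intro hcond
    have hAB : ∀ j : Fin n, PA K n q j = PB K n q j := by
      intro j
      by_cases hj : (j : ℕ) < n - 1
      · exact (cond_iff j hj).1 (hcond j hj)
      · have hjl : j = last := by
          have := j.isLt
          exact Fin.ext (by simp only [hlast]; omega)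
        subst hjl
        have hprod := prod_PA_eq_PB (K := K) (n := n) (q := q)
        rw [← Finset.mul_prod_erase univ _ (Finset.mem_univ last),
          ← Finset.mul_prod_erase univ (PB K n q) (Finset.mem_univ last)] at hprod
        have heq : ∏ p ∈ univ.erase last, PA K n q p = ∏ p ∈ univ.erase last, PB K n q p := by
          refine Finset.prod_congr rfl fun p hp => ?_
          have hpl : p ≠ last := (Finset.mem_erase.1 hp).1
          have hplt : (p : ℕ) < n - 1 := by
            have h1 := p.isLt
            have h2 : (p : ℕ) ≠ n - 1 := fun h => hpl (Fin.ext (by simp [hlast, h]))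
            omega
          exact (cond_iff p hplt).1 (hcond p hplt)
        rw [heq] at hprod
        have hPne : (∏ p ∈ univ.erase last, PB K n q p) ≠ 0 :=
          Finset.prod_ne_zero_iff.2 fun p _ => PB_ne_zero hq p
        exact mul_right_cancel₀ hPne hprod
    have hccc : ∀ S : Finset (Fin n), ccc K n q S Sᶜ = ccc K n q Sᶜ S := cc_compl hq hAB
    haveI : FiniteDimensional K (Aq K n q) := Module.Finite.of_basis (bb K n q)
    set f : Aq K n q →ₗ[K] Module.Dual K (Aq K n q) :=
      (LinearMap.mul K (Aq K n q)).compr₂ (tt K n q) with hf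
    have hfapp : ∀ x y : Aq K n q, f x y = tt K n q (x * y) := fun x y => rfl
    have tt_comm : ∀ x y : Aq K n q, tt K n q (x * y) = tt K n q (y * x) := by
      set g : Aq K n q →ₗ[K] Module.Dual K (Aq K n q) :=
        (LinearMap.mul K (Aq K n q)).flip.compr₂ (tt K n q) with hg
      have hgapp : ∀ x y : Aq K n q, g x y = tt K n q (y * x) := fun x y => rfl
      have hfg : f = g := by
        refine (bb K n q).ext fun S => (bb K n q).ext fun T => ?_
        rw [hfapp, hgapp, bb_apply, bb_apply, tt_mm, tt_mm]
        by_cases hT : T = Sᶜ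
        · subst hT
          rw [if_pos rfl, if_pos (compl_compl S).symm, compl_compl]
          exact hccc S
        · have hS : ¬ S = Tᶜ := fun h => hT (by rw [h, compl_compl])
          rw [if_neg hT, if_neg hS]
      intro x y
      rw [← hfapp, hfg, hgapp]
    have hrepr : ∀ (x : Aq K n q) (S : Finset (Fin n)),
        f x (mon K n q Sᶜ) = (bb K n q).repr x S * ccc K n q S Sᶜ := by
      intro x S
      rw [hfapp]
      conv_lhs => rw [← Module.Basis.sum_repr (bb K n q) x]
      rw [Finset.sum_mul]
      have hterm : ∀ T ∈ (Finset.univ : Finset (Finset (Fin n))),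
          tt K n q (((bb K n q).repr x T • bb K n q T) * mon K n q Sᶜ) =
            if T = S then (bb K n q).repr x T * ccc K n q T Tᶜ else 0 := by
        intro T _
        rw [bb_apply, smul_mul_assoc, map_smul, smul_eq_mul, tt_mm]
        by_cases hTS : T = S
        · subst hTS; rw [if_pos rfl, if_pos rfl]
        · have : ¬ (Sᶜ = Tᶜ) := fun h => hTS (compl_inj_iff.1 h).symm
          rw [if_neg this, mul_zero, if_neg hTS]
      rw [map_sum, Finset.sum_congr rfl hterm, Finset.sum_ite_eq' Finset.univ S
        (fun T => (bb K n q).repr x T * ccc K n q T Tᶜ), if_pos (Finset.mem_univ S)]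
    have hinj : Function.Injective f := by
      have hker : ∀ x : Aq K n q, f x = 0 → x = 0 := by
        intro x hx
        have hco : ∀ S : Finset (Fin n), (bb K n q).repr x S = 0 := by
          intro S
          have := hrepr x S
          rw [hx, LinearMap.zero_apply] at this
          exact (mul_eq_zero.1 this.symm).resolve_right (ccc_ne_zero hq S Sᶜ)
        have : (bb K n q).repr x = 0 := by
          ext S; simp [hco S]
        have := (bb K n q).repr.map_eq_zero_iff.1 this
        exact this
      intro a b hab
      have : f (a - b) = 0 := by rw [map_sub, hab, sub_self]
      have := hker _ this
      exact sub_eq_zero.1 this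
    have hdim : Module.finrank K (Aq K n q) =
        Module.finrank K (Module.Dual K (Aq K n q)) :=
      Subspace.dual_finrank_eq.symm
    refine ⟨f.linearEquivOfInjective hinj hdim, ?_, ?_⟩
    · intro a x y
      rw [LinearMap.linearEquivOfInjective_apply, LinearMap.linearEquivOfInjective_apply,
        hfapp, hfapp, mul_assoc, ← mul_assoc x y a, tt_comm]
    · intro a x y
      rw [LinearMap.linearEquivOfInjective_apply, LinearMap.linearEquivOfInjective_apply,
        hfapp, hfapp, mul_assoc]
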